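/- Let 0 < r < q < ∞, s > 1/r − 1/q, ε > 0, set s' = s − (1/r − 1/q) − ε and assume s' ≥ 0. Then there is a constant C such that for all nonnegative a : ℤ^n → ℝ≥0: (∑_{k_n ∈ ℤ} (∑_{k̄ ∈ ℤ^{n-1}} ⟨k̄⟩^{s'q} a(k̄,k_n)^q)^{r/q})^{1/r} ≤ C (∑_{k ∈ ℤ^n} ⟨k⟩^{sq} a(k)^q)^{1/q}. -/

import Mathlib

open scoped ENNReal NNReal BigOperators

/-- Japanese bracket of a lattice point. -/
noncomputable def jb {m : ℕ} (k : Fin m → ℤ) : ℝ := Real.sqrt (1 + ∑ i, ((k i : ℝ))^2)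

/-- Japanese bracket of a lattice point `(k̄, kₙ) ∈ ℤ^{m} × ℤ`. -/
noncomputable def jb2 {m : ℕ} (kb : Fin m → ℤ) (kn : ℤ) : ℝ :=
  Real.sqrt (1 + ∑ i, ((kb i : ℝ))^2 + (kn : ℝ)^2)

open MeasureTheory

lemma holder_tsum {f g : ℤ → ℝ≥0∞} {p p' : ℝ} (hpq : p.HolderConjugate p') :
    ∑' k, f k * g k ≤ (∑' k, f k ^ p) ^ (1/p) * (∑' k, g k ^ p') ^ (1/p') := by
  have := ENNReal.lintegral_mul_le_Lp_mul_Lq (Measure.count (α := ℤ)) hpq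
    (measurable_of_countable f).aemeasurable (measurable_of_countable g).aemeasurable
  simpa [lintegral_count] using this

lemma summable_aux {t : ℝ} (ht : 1/2 < t) :
    Summable (fun k : ℤ => (1 + (k:ℝ)^2) ^ (-t)) := by
  have key : Summable (fun n : ℕ => (1 + (n:ℝ)^2) ^ (-t)) := by
    have h1 : Summable (fun n : ℕ => (2:ℝ)^t * ((n:ℝ)+1) ^ (-(2*t))) := by
      have : Summable (fun n : ℕ => ((n:ℝ)+1) ^ (-(2*t))) := by
        have := (Real.summable_nat_rpow (p := -(2*t))).2 (by linarith)
        have h := (summable_nat_add_iff (f := fun n : ℕ => (n:ℝ) ^ (-(2*t))) 1).2 this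
        simpa [Nat.cast_add] using h
      exact this.mul_left _
    refine h1.of_nonneg_of_le (fun n => Real.rpow_nonneg (by positivity) _) (fun n => ?_)
    have hb : ((n:ℝ)+1)^2 ≤ 2 * (1 + (n:ℝ)^2) := by nlinarith [sq_nonneg ((n:ℝ) - 1)]
    have h2 : (1 + (n:ℝ)^2) ^ (-t) ≤ (((n:ℝ)+1)^2 / 2) ^ (-t) := by
      apply Real.rpow_le_rpow_of_nonpos (by positivity) (by linarith) (by linarith)
    refine h2.trans_eq ?_
    have e1 : (((n:ℝ)+1)^2 / 2) ^ (-t) = (((n:ℝ)+1)^2)^(-t) * ((2:ℝ)^(-t))⁻¹ := by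
      rw [Real.div_rpow (by positivity) (by norm_num), div_eq_mul_inv]
    have e2 : ((2:ℝ)^(-t))⁻¹ = 2^t := by
      rw [Real.rpow_neg (by norm_num : (0:ℝ) ≤ 2), inv_inv]
    rw [e1, e2, ← Real.rpow_natCast ((n:ℝ)+1) 2, ← Real.rpow_mul (by positivity)]
    push_cast
    ring_nf
  refine Summable.of_nat_of_neg key ?_
  simpa using key

theorem stmt_4 (n : ℕ) (hn : 2 ≤ n) (r q s ε s' : ℝ) (hr : 0 < r) (hrq : r < q)
    (hs : 1/r - 1/q < s) (hε : 0 < ε)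
    (hs' : s' = s - (1/r - 1/q) - ε) (hs'0 : 0 ≤ s') :
    ∃ C : ℝ≥0, ∀ a : (Fin (n-1) → ℤ) → ℤ → ℝ≥0,
      (∑' kn : ℤ, (∑' kb : Fin (n-1) → ℤ,
          ENNReal.ofReal (jb kb ^ (s' * q)) * (a kb kn : ℝ≥0∞) ^ q) ^ (r/q)) ^ (1/r) ≤
        (C : ℝ≥0∞) * (∑' kb : Fin (n-1) → ℤ, ∑' kn : ℤ,
          ENNReal.ofReal (jb2 kb kn ^ (s * q)) * (a kb kn : ℝ≥0∞) ^ q) ^ (1/q) := by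
  have hq : 0 < q := hr.trans hrq
  have hqr : 0 < q - r := by linarith
  set β : ℝ := 1/r - 1/q + ε with hβdef
  have hrq' : 0 < 1/r - 1/q := by
    have h1 : 1/q < 1/r := one_div_lt_one_div_of_lt hr hrq
    linarith
  have hβ : 0 < β := by positivity
  have hsplit : s = s' + β := by rw [hs', hβdef]; ring
  set p : ℝ := q / r with hpdef
  set p' : ℝ := q / (q - r) with hp'def
  have hp : 1 < p := (one_lt_div hr).2 hrq
  have hp'pos : 0 < p' := by positivity
  have hpq : p.HolderConjugate p' := by
    rw [Real.holderConjugate_iff]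
    constructor
    · exact hp
    · rw [hpdef, hp'def, inv_div, inv_div, ← add_div, add_sub_cancel, div_self hq.ne']
  have hkey : β * r * p' = 1 + ε * r * q / (q - r) := by
    rw [hβdef, hp'def]
    field_simp
  have ht : 1/2 < β * r * p' / 2 := by
    have h1 : 0 < ε * r * q / (q - r) := by positivity
    rw [hkey]; linarith
  set C0 : ℝ≥0∞ := ∑' kn : ℤ, ENNReal.ofReal ((1 + (kn:ℝ)^2) ^ (-(β*r*p'/2))) with hC0def
  have hC0 : C0 ≠ ⊤ := by
    rw [hC0def, ← ENNReal.ofReal_tsum_of_nonneg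
      (fun k => Real.rpow_nonneg (by positivity) _) (summable_aux ht)]
    exact ENNReal.ofReal_ne_top
  refine ⟨(C0 ^ (1/(p'*r))).toNNReal, fun a => ?_⟩
  have hu : ∀ kn : ℤ, (0:ℝ) < 1 + (kn:ℝ)^2 := fun kn => by positivity
  set T : ℤ → ℝ≥0∞ := fun kn => ∑' kb : Fin (n-1) → ℤ,
    ENNReal.ofReal (jb kb ^ (s' * q)) * (a kb kn : ℝ≥0∞) ^ q with hTdef
  set W : ℤ → ℝ≥0∞ := fun kn => ENNReal.ofReal ((1 + (kn:ℝ)^2) ^ (-(β*r/2))) with hWdef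
  set V : ℤ → ℝ≥0∞ := fun kn =>
    ENNReal.ofReal ((1 + (kn:ℝ)^2) ^ (β*q/2)) * T kn with hVdef
  -- factorization
  have hfac : ∀ kn, T kn ^ (r/q) = W kn * (V kn) ^ (r/q) := by
    intro kn
    have h1 : (V kn) ^ (r/q)
        = ENNReal.ofReal ((1 + (kn:ℝ)^2) ^ (β*r/2)) * T kn ^ (r/q) := by
      rw [hVdef, ENNReal.mul_rpow_of_nonneg _ _ (by positivity : (0:ℝ) ≤ r/q),
        ENNReal.ofReal_rpow_of_pos (by positivity), ← Real.rpow_mul (hu kn).le]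
      congr 3
      field_simp
    rw [h1, ← mul_assoc, hWdef, ← ENNReal.ofReal_mul (Real.rpow_nonneg (hu kn).le _),
      ← Real.rpow_add (hu kn)]
    norm_num
  -- Hölder
  have hW : ∀ kn, W kn ^ p' = ENNReal.ofReal ((1 + (kn:ℝ)^2) ^ (-(β*r*p'/2))) := by
    intro kn
    rw [hWdef, ENNReal.ofReal_rpow_of_pos (by positivity), ← Real.rpow_mul (hu kn).le]
    congr 2
    ring
  have hVp : ∀ kn, ((V kn) ^ (r/q)) ^ p = V kn := by
    intro kn
    rw [← ENNReal.rpow_mul]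
    have : r/q * p = 1 := by rw [hpdef]; field_simp
    rw [this, ENNReal.rpow_one]
  have hold : ∑' kn, W kn * (V kn) ^ (r/q)
      ≤ C0 ^ (1/p') * (∑' kn, V kn) ^ (r/q) := by
    have h := holder_tsum (f := W) (g := fun kn => (V kn) ^ (r/q)) hpq.symm
    simp only [hW, hVp] at h
    rw [← hC0def] at h
    have hpinv : 1/p = r/q := by rw [hpdef]; field_simp
    rwa [hpinv] at h
  -- comparison with RHS
  have hV : ∀ kn, V kn ≤ ∑' kb : Fin (n-1) → ℤ,
      ENNReal.ofReal (jb2 kb kn ^ (s * q)) * (a kb kn : ℝ≥0∞) ^ q := by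
    intro kn
    show ENNReal.ofReal ((1 + (kn:ℝ)^2) ^ (β*q/2)) * (∑' kb : Fin (n-1) → ℤ,
      ENNReal.ofReal (jb kb ^ (s' * q)) * (a kb kn : ℝ≥0∞) ^ q) ≤ _
    rw [← ENNReal.tsum_mul_left]
    refine ENNReal.tsum_le_tsum fun kb => ?_
    rw [← mul_assoc, ← ENNReal.ofReal_mul (Real.rpow_nonneg (hu kn).le _)]
    refine mul_le_mul_left (ENNReal.ofReal_le_ofReal ?_) _
    -- pointwise real inequality
    have hsum : (0:ℝ) ≤ ∑ i, ((kb i : ℝ))^2 := by positivity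
    have hA : (0:ℝ) < jb2 kb kn := Real.sqrt_pos.2 (by positivity)
    have h1 : jb kb ≤ jb2 kb kn := by
      apply Real.sqrt_le_sqrt
      nlinarith [sq_nonneg ((kn:ℝ))]
    have h2 : Real.sqrt (1 + (kn:ℝ)^2) ≤ jb2 kb kn := by
      apply Real.sqrt_le_sqrt
      linarith
    have e1 : (1 + (kn:ℝ)^2) ^ (β*q/2) = Real.sqrt (1 + (kn:ℝ)^2) ^ (β*q) := by
      rw [Real.sqrt_eq_rpow, ← Real.rpow_mul (hu kn).le]
      congr 1
      ring
    calc (1 + (kn:ℝ)^2) ^ (β*q/2) * jb kb ^ (s' * q)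
        = Real.sqrt (1 + (kn:ℝ)^2) ^ (β*q) * jb kb ^ (s' * q) := by rw [e1]
      _ ≤ jb2 kb kn ^ (β*q) * jb2 kb kn ^ (s' * q) := by
          apply mul_le_mul
          · exact Real.rpow_le_rpow (Real.sqrt_nonneg _) h2 (by positivity)
          · exact Real.rpow_le_rpow (Real.sqrt_nonneg _) h1 (by positivity)
          · exact Real.rpow_nonneg (Real.sqrt_nonneg _) _
          · exact Real.rpow_nonneg hA.le _
      _ = jb2 kb kn ^ (s * q) := by
          rw [← Real.rpow_add hA]
          congr 1
          rw [hsplit]; ring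
  have hVS : ∑' kn, V kn ≤ ∑' kb : Fin (n-1) → ℤ, ∑' kn : ℤ,
      ENNReal.ofReal (jb2 kb kn ^ (s * q)) * (a kb kn : ℝ≥0∞) ^ q := by
    rw [ENNReal.tsum_comm]
    exact ENNReal.tsum_le_tsum hV
  set S : ℝ≥0∞ := ∑' kb : Fin (n-1) → ℤ, ∑' kn : ℤ,
      ENNReal.ofReal (jb2 kb kn ^ (s * q)) * (a kb kn : ℝ≥0∞) ^ q with hSdef
  have main : (∑' kn, T kn ^ (r/q)) ^ (1/r) ≤ (C0 ^ (1/p') * S ^ (r/q)) ^ (1/r) := by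
    apply ENNReal.rpow_le_rpow _ (by positivity)
    calc ∑' kn, T kn ^ (r/q) = ∑' kn, W kn * (V kn) ^ (r/q) := by
          exact tsum_congr hfac
      _ ≤ C0 ^ (1/p') * (∑' kn, V kn) ^ (r/q) := hold
      _ ≤ C0 ^ (1/p') * S ^ (r/q) := by
          exact mul_le_mul_right (ENNReal.rpow_le_rpow hVS (by positivity)) _
  have hfin : (C0 ^ (1/p') * S ^ (r/q)) ^ (1/r)
      = (C0 ^ (1/(p'*r)) : ℝ≥0∞) * S ^ (1/q) := by
    rw [ENNReal.mul_rpow_of_nonneg _ _ (by positivity : (0:ℝ) ≤ 1/r),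
      ← ENNReal.rpow_mul, ← ENNReal.rpow_mul]
    congr 1
    · congr 1
      field_simp
    · congr 1
      field_simp
  have hcoe : ((C0 ^ (1/(p'*r))).toNNReal : ℝ≥0∞) = C0 ^ (1/(p'*r)) :=
    ENNReal.coe_toNNReal (ENNReal.rpow_ne_top_of_nonneg (by positivity) hC0)
  calc (∑' kn, T kn ^ (r/q)) ^ (1/r)
      ≤ (C0 ^ (1/p') * S ^ (r/q)) ^ (1/r) := main
    _ = (C0 ^ (1/(p'*r)) : ℝ≥0∞) * S ^ (1/q) := hfin
    _ = ((C0 ^ (1/(p'*r))).toNNReal : ℝ≥0∞) * S ^ (1/q) := by rw [hcoe]
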